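/- The discrete Caldirola-Kanai scheme (y^{n+1}-y^n)/Δt = e^{-γ(n+1/2)Δt}(ϖ^{n+1}+ϖ^n)/(2m), (ϖ^{n+1}-ϖ^n)/Δt = -e^{γ(n+1/2)Δt}(k/2)(y^{n+1}+y^n), expressed in variables (y, q) with qⁿ = ϖⁿ e^{-γnΔt}Δt/(2m), defines a linear map (yⁿ,qⁿ) ↦ (y^{n+1},q^{n+1}) whose Jacobian determinant equals e^{-γΔt}. -/

import Mathlib

theorem stmt14 (m k γ Δt : ℝ) (hm : 0 < m) (hk : 0 ≤ k) (hΔt : 0 < Δt)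
    (hden : 1 + Δt ^ 2 * k / (4 * m) ≠ 0)
    (Φ : ℝ × ℝ → ℝ × ℝ)
    (hΦ : ∀ v : ℝ × ℝ,
      Φ v =
        (v.1 + (2 * v.2 * Real.exp (-γ * Δt / 2) - Δt ^ 2 * k * v.1 / (2 * m)) /
            (1 + Δt ^ 2 * k / (4 * m)),
          ((2 * v.2 * Real.exp (-γ * Δt / 2) - Δt ^ 2 * k * v.1 / (2 * m)) /
              (1 + Δt ^ 2 * k / (4 * m))) * Real.exp (-γ * Δt / 2) -
            v.2 * Real.exp (-γ * Δt))) :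
    ∀ v : ℝ × ℝ, (fderiv ℝ Φ v).det = Real.exp (-γ * Δt) := by
  have hm' : m ≠ 0 := hm.ne'
  set E : ℝ := Real.exp (-γ * Δt / 2) with hE
  set D : ℝ := 1 + Δt ^ 2 * k / (4 * m) with hD
  set a : ℝ := Δt ^ 2 * k / (2 * m) with ha
  set A : ℝ := 1 - a / D with hA
  set B : ℝ := 2 * E / D with hB
  set C : ℝ := - (a * E) / D with hC
  set G : ℝ := 2 * E * E / D - Real.exp (-γ * Δt) with hG
  have hEE : E * E = Real.exp (-γ * Δt) := by
    rw [hE, ← Real.exp_add]; ring_nf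
  have ha2 : a / 2 = Δt ^ 2 * k / (4 * m) := by rw [ha]; ring
  have hD2 : D = 1 + a / 2 := by rw [hD, ha2]
  let f : ℝ × ℝ →ₗ[ℝ] ℝ × ℝ :=
    { toFun := fun v => (A * v.1 + B * v.2, C * v.1 + G * v.2)
      map_add' := by intro x y; simp [Prod.ext_iff]; constructor <;> ring
      map_smul' := by intro c x; simp [Prod.ext_iff, smul_eq_mul]; constructor <;> ring }
  have hΦf : Φ = ⇑(f.toContinuousLinearMap) := by
    funext v
    rw [hΦ v]
    show _ = (A * v.1 + B * v.2, C * v.1 + G * v.2)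
    have h1 : v.1 + (2 * v.2 * E - Δt ^ 2 * k * v.1 / (2 * m)) / D = A * v.1 + B * v.2 := by
      rw [hA, hB, ha]
      field_simp
      ring
    have h2 : ((2 * v.2 * E - Δt ^ 2 * k * v.1 / (2 * m)) / D) * E - v.2 * Real.exp (-γ * Δt)
        = C * v.1 + G * v.2 := by
      rw [hC, hG, ha]
      field_simp
      ring
    exact Prod.ext h1 h2
  intro v
  rw [hΦf, (f.toContinuousLinearMap.hasFDerivAt (x := v)).fderiv]
  have hdet : (f.toContinuousLinearMap : ℝ × ℝ →L[ℝ] ℝ × ℝ).det = LinearMap.det f := by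
    simp [ContinuousLinearMap.det]
  rw [hdet, ← LinearMap.det_toMatrix (Module.Basis.finTwoProd ℝ), Matrix.det_fin_two]
  have h00 : (LinearMap.toMatrix (Module.Basis.finTwoProd ℝ) (Module.Basis.finTwoProd ℝ) f) 0 0 = A := by
    simp [LinearMap.toMatrix_apply, Module.Basis.finTwoProd, f]
  have h01 : (LinearMap.toMatrix (Module.Basis.finTwoProd ℝ) (Module.Basis.finTwoProd ℝ) f) 0 1 = B := by
    simp [LinearMap.toMatrix_apply, Module.Basis.finTwoProd, f]
  have h10 : (LinearMap.toMatrix (Module.Basis.finTwoProd ℝ) (Module.Basis.finTwoProd ℝ) f) 1 0 = C := by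
    simp [LinearMap.toMatrix_apply, Module.Basis.finTwoProd, f]
  have h11 : (LinearMap.toMatrix (Module.Basis.finTwoProd ℝ) (Module.Basis.finTwoProd ℝ) f) 1 1 = G := by
    simp [LinearMap.toMatrix_apply, Module.Basis.finTwoProd, f]
  rw [h00, h01, h10, h11, hA, hB, hC, hG, ← hEE]
  have hne : (1 : ℝ) + a / 2 ≠ 0 := by rw [ha2]; exact hden
  rw [hD2]
  have hne2 : (2 : ℝ) + a ≠ 0 := by intro h; apply hne; linarith
  field_simp
  ring
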